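/- arXiv:1807.07237 — 2 statements merged into one kernel-verified Lean document; each statement's English description precedes it below -/
import Mathlib

section
/- Let π = ν * N(0, τ²) be the convolution of a probability distribution ν supported on [−1,1] with a centered Gaussian of variance τ², and let π' be a k-atomic probability distribution supported on [−1,1]. If |m_i(π) − m_i(π')| ≤ ε for all i = 1, …, 2k, then τ ≤ 2 (ε / k!)^{1/(2k)}. -/
open MeasureTheory ProbabilityTheory

open Polynomial Real Filter Set
open scoped NNReal ENNReal


noncomputable def γ : Measure ℝ := gaussianReal 0 1

instance : IsProbabilityMeasure γ := by rw [γ]; infer_instance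

lemma pdf01 (x : ℝ) : gaussianPDFReal 0 1 x = (Real.sqrt (2 * π))⁻¹ * Real.exp (-(1/2) * x ^ 2) := by
  simp only [gaussianPDFReal, NNReal.coe_one, mul_one, sub_zero]
  ring_nf

lemma gamma_eq : γ = volume.withDensity (fun x => ENNReal.ofReal (gaussianPDFReal 0 1 x)) := by
  rw [γ, gaussianReal_of_var_ne_zero _ one_ne_zero]
  rfl

lemma integral_gamma (g : ℝ → ℝ) :
    ∫ x, g x ∂γ = ∫ x, gaussianPDFReal 0 1 x * g x := by
  rw [gamma_eq]
  have h : (fun x => ENNReal.ofReal (gaussianPDFReal 0 1 x))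
      = (fun x => ((Real.toNNReal (gaussianPDFReal 0 1 x) : ℝ≥0) : ℝ≥0∞)) := rfl
  rw [h, integral_withDensity_eq_integral_smul
    ((measurable_gaussianPDFReal 0 1).real_toNNReal)]
  congr 1; ext x
  simp [NNReal.smul_def, Real.coe_toNNReal _ (gaussianPDFReal_nonneg 0 1 x)]

lemma integrable_gamma_iff (g : ℝ → ℝ) :
    Integrable g γ ↔ Integrable (fun x => gaussianPDFReal 0 1 x * g x) := by
  rw [gamma_eq]
  have h : (fun x => ENNReal.ofReal (gaussianPDFReal 0 1 x))
      = (fun x => ((Real.toNNReal (gaussianPDFReal 0 1 x) : ℝ≥0) : ℝ≥0∞)) := rfl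
  rw [h, integrable_withDensity_iff_integrable_smul
    ((measurable_gaussianPDFReal 0 1).real_toNNReal)]
  constructor <;> intro hh <;> refine hh.congr (Filter.Eventually.of_forall fun x => ?_) <;>
    simp [NNReal.smul_def, Real.coe_toNNReal _ (gaussianPDFReal_nonneg 0 1 x)]

lemma integrable_pow_gauss (n : ℕ) (b : ℝ) (hb : 0 < b) :
    Integrable (fun x : ℝ => x ^ n * Real.exp (-b * x ^ 2)) := by
  have h := integrable_rpow_mul_exp_neg_mul_sq hb (s := (n : ℝ)) (lt_of_lt_of_le neg_one_lt_zero (Nat.cast_nonneg n))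
  refine h.congr (Filter.Eventually.of_forall fun x => ?_)
  simp [Real.rpow_natCast]

lemma integrable_poly_gauss (p : ℝ[X]) (b : ℝ) (hb : 0 < b) :
    Integrable (fun x : ℝ => p.eval x * Real.exp (-b * x ^ 2)) := by
  have : (fun x : ℝ => p.eval x * Real.exp (-b * x ^ 2))
      = fun x : ℝ => ∑ i ∈ Finset.range (p.natDegree + 1),
          p.coeff i * (x ^ i * Real.exp (-b * x ^ 2)) := by
    ext x
    rw [eval_eq_sum_range, Finset.sum_mul]
    congr 1; ext i; ring
  rw [this]
  exact integrable_finset_sum _ fun i _ => (integrable_pow_gauss i b hb).const_mul _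

lemma tendsto_poly_gauss_atTop (p : ℝ[X]) :
    Tendsto (fun x : ℝ => p.eval x * Real.exp (-(1/2) * x ^ 2)) atTop (nhds 0) := by
  have key : ∀ i : ℕ, Tendsto (fun x : ℝ => x ^ i * Real.exp (-(1/2) * x ^ 2)) atTop (nhds 0) := by
    intro i
    have h := rpow_mul_exp_neg_mul_sq_isLittleO_exp_neg (b := 1/2) (by norm_num) (i : ℝ)
    have h2 : Tendsto (fun x : ℝ => Real.exp (-(1/2) * x)) atTop (nhds 0) := by
      apply Real.tendsto_exp_atBot.comp
      exact (tendsto_id.const_mul_atTop_of_neg (by norm_num))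
    have h3 := h.trans_tendsto h2
    refine h3.congr' ?_
    filter_upwards [eventually_ge_atTop (0:ℝ)] with x _
    rw [Real.rpow_natCast]
  have : (fun x : ℝ => p.eval x * Real.exp (-(1/2) * x ^ 2))
      = fun x : ℝ => ∑ i ∈ Finset.range (p.natDegree + 1),
          p.coeff i * (x ^ i * Real.exp (-(1/2) * x ^ 2)) := by
    ext x; rw [eval_eq_sum_range, Finset.sum_mul]; congr 1; ext i; ring
  rw [this]
  have := tendsto_finset_sum (Finset.range (p.natDegree + 1))
    (fun i _ => ((key i).const_mul (p.coeff i)))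
  simpa using this

lemma tendsto_poly_gauss_atBot (p : ℝ[X]) :
    Tendsto (fun x : ℝ => p.eval x * Real.exp (-(1/2) * x ^ 2)) atBot (nhds 0) := by
  have h := tendsto_poly_gauss_atTop (p.comp (-X))
  have h2 := h.comp tendsto_neg_atBot_atTop
  refine h2.congr fun x => ?_
  simp [Function.comp, eval_comp]

lemma integral_deriv_poly_gauss (p : ℝ[X]) :
    ∫ x : ℝ, ((derivative p).eval x - x * p.eval x) * Real.exp (-(1/2) * x ^ 2) = 0 := by
  set G : ℝ → ℝ := fun x => p.eval x * Real.exp (-(1/2) * x ^ 2) with hG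
  set G' : ℝ → ℝ := fun x => ((derivative p).eval x - x * p.eval x) * Real.exp (-(1/2) * x ^ 2)
    with hG'
  have hderiv : ∀ x : ℝ, HasDerivAt G (G' x) x := by
    intro x
    have h1 : HasDerivAt (fun y : ℝ => p.eval y) ((derivative p).eval x) x :=
      p.hasDerivAt x
    have h2 : HasDerivAt (fun y : ℝ => Real.exp (-(1/2) * y ^ 2))
        (-x * Real.exp (-(1/2) * x ^ 2)) x := by
      have hinner : HasDerivAt (fun y : ℝ => -(1/2) * y ^ 2) (-x) x := by
        have := (hasDerivAt_pow 2 x).const_mul (-(1/2) : ℝ)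
        simpa using this.congr_deriv (by ring)
      simpa using hinner.exp.congr_deriv (by ring)
    have := h1.mul h2
    refine HasDerivAt.congr_deriv (by exact this) ?_
    simp only [hG']
    ring
  have hq : G' = fun x => (derivative p - X * p).eval x * Real.exp (-(1/2) * x ^ 2) := by
    ext x; simp [hG']
  have hint : Integrable G' := by
    rw [hq]; exact integrable_poly_gauss _ _ (by norm_num)
  have h1 : ∫ x in Iic (0:ℝ), G' x = G 0 - 0 :=
    integral_Iic_of_hasDerivAt_of_tendsto' (fun x _ => hderiv x) hint.integrableOn
      (tendsto_poly_gauss_atBot p)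
  have h2 : ∫ x in Ioi (0:ℝ), G' x = 0 - G 0 :=
    integral_Ioi_of_hasDerivAt_of_tendsto' (fun x _ => hderiv x) hint.integrableOn
      (tendsto_poly_gauss_atTop p)
  have := intervalIntegral.integral_Iic_add_Ioi (f := G') (b := 0)
    hint.integrableOn hint.integrableOn
  rw [h1, h2] at this
  rw [← this]; ring

lemma integral_gamma_poly (q : ℝ[X]) :
    ∫ x, q.eval x ∂γ
      = (Real.sqrt (2 * π))⁻¹ * ∫ x, q.eval x * Real.exp (-(1/2) * x ^ 2) := by
  rw [integral_gamma, ← integral_const_mul]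
  congr 1; ext x; rw [pdf01]; ring

lemma integrable_poly_gamma (p : ℝ[X]) : Integrable (fun x => p.eval x) γ := by
  rw [integrable_gamma_iff]
  have := (integrable_poly_gauss p (1/2) (by norm_num)).const_mul (Real.sqrt (2 * π))⁻¹
  refine this.congr (Filter.Eventually.of_forall fun x => ?_)
  simp only [pdf01]; ring

lemma stein (p : ℝ[X]) :
    ∫ x, (X * p).eval x ∂γ = ∫ x, (derivative p).eval x ∂γ := by
  rw [integral_gamma_poly, integral_gamma_poly]
  congr 1
  rw [← sub_eq_zero, ← integral_sub (integrable_poly_gauss _ _ (by norm_num))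
    (integrable_poly_gauss _ _ (by norm_num))]
  rw [← neg_zero, ← integral_deriv_poly_gauss p, ← integral_neg]
  congr 1; ext x; simp; ring

noncomputable def H (k : ℕ) : ℝ[X] := (Polynomial.hermite k).map (Int.castRingHom ℝ)

lemma H_succ (k : ℕ) : H (k + 1) = X * H k - derivative (H k) := by
  rw [H, hermite_succ]
  simp [Polynomial.map_mul, Polynomial.map_sub, derivative_map, H]

lemma H_monic (k : ℕ) : (H k).Monic := (hermite_monic k).map _

lemma H_natDegree (k : ℕ) : (H k).natDegree = k := by
  rw [H, (hermite_monic k).natDegree_map, natDegree_hermite]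

lemma hermite_inner (k : ℕ) (p : ℝ[X]) :
    ∫ x, (p * H k).eval x ∂γ = ∫ x, (derivative^[k] p).eval x ∂γ := by
  induction k generalizing p with
  | zero => simp [H, hermite_zero]
  | succ k ih =>
    have e1 : p * H (k + 1) = X * (p * H k) - p * derivative (H k) := by
      rw [H_succ]; ring
    rw [e1]
    have i1 := integrable_poly_gamma (X * (p * H k))
    have i2 := integrable_poly_gamma (p * derivative (H k))
    have e2 : ∫ x, (X * (p * H k) - p * derivative (H k)).eval x ∂γ
        = (∫ x, (X * (p * H k)).eval x ∂γ) - ∫ x, (p * derivative (H k)).eval x ∂γ := by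
      rw [← integral_sub i1 i2]; simp
    rw [e2, stein, derivative_mul]
    have e3 : ∫ x, (derivative p * H k + p * derivative (H k)).eval x ∂γ
        = (∫ x, (derivative p * H k).eval x ∂γ) + ∫ x, (p * derivative (H k)).eval x ∂γ := by
      rw [← integral_add (integrable_poly_gamma _) i2]; simp
    rw [e3, ih (derivative p), Function.iterate_succ_apply]
    ring

lemma iterate_deriv_of_deg_le : ∀ (k : ℕ) (p : ℝ[X]), p.natDegree ≤ k →
    derivative^[k] p = C ((k.factorial : ℝ) * p.coeff k) := by
  intro k
  induction k with
  | zero => intro p h; simpa using (Polynomial.eq_C_of_natDegree_le_zero h)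
  | succ k ih =>
    intro p h
    rw [Function.iterate_succ_apply, ih (derivative p)
      (le_trans (natDegree_derivative_le p) (by omega))]
    rw [coeff_derivative]
    congr 1
    rw [Nat.factorial_succ]
    push_cast
    ring

lemma integral_mul_H (k : ℕ) (q : ℝ[X]) (hm : q.Monic) (hd : q.natDegree = k) :
    ∫ x, (q * H k).eval x ∂γ = (k.factorial : ℝ) := by
  rw [hermite_inner, iterate_deriv_of_deg_le k q hd.le]
  have : q.coeff k = 1 := by rw [← hd]; exact hm
  rw [this, mul_one]
  simp [integral_const]

lemma sq_integral_lb (k : ℕ) (q : ℝ[X]) (hm : q.Monic) (hd : q.natDegree = k) :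
    (k.factorial : ℝ) ≤ ∫ x, (q.eval x) ^ 2 ∂γ := by
  have h0 : (0:ℝ) ≤ ∫ x, ((q - H k).eval x) ^ 2 ∂γ :=
    integral_nonneg fun x => sq_nonneg _
  have e : ∀ x : ℝ, ((q - H k).eval x) ^ 2
      = ((q*q).eval x - 2 * ((q * H k).eval x)) + (H k * H k).eval x := by
    intro x; simp [eval_sub, eval_mul]; ring
  have i1 := integrable_poly_gamma (q*q)
  have i2 := integrable_poly_gamma (q * H k)
  have i3 := integrable_poly_gamma (H k * H k)
  have e2 : ∫ x, ((q - H k).eval x) ^ 2 ∂γ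
      = ((∫ x, (q*q).eval x ∂γ) - 2 * ∫ x, (q * H k).eval x ∂γ) + ∫ x, (H k * H k).eval x ∂γ := by
    calc ∫ x, ((q - H k).eval x) ^ 2 ∂γ
        = ∫ x, ((q*q).eval x - 2 * ((q * H k).eval x) + (H k * H k).eval x) ∂γ := by
          congr 1; ext x; exact e x
      _ = _ := by
          have i2' : Integrable (fun x => 2 * ((q * H k).eval x)) γ := i2.const_mul 2
          have i12 : Integrable (fun x => (q*q).eval x - 2 * ((q * H k).eval x)) γ := i1.sub i2'
          rw [integral_add i12 i3, integral_sub i1 i2', integral_const_mul]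
  rw [e2, integral_mul_H k q hm hd, integral_mul_H k (H k) (H_monic k) (H_natDegree k)] at h0
  have : ∫ x, (q.eval x) ^ 2 ∂γ = ∫ x, (q*q).eval x ∂γ := by
    congr 1; ext x; simp [eval_mul]; ring
  rw [this]
  linarith

lemma l1_linear_prod (N : ℕ) : ∀ (M : Multiset ℝ), (∀ a ∈ M, |a| ≤ 1) →
    ∑ i ∈ Finset.range (N+1), |((M.map (fun a => X - C a)).prod).coeff i|
      ≤ 2 ^ (Multiset.card M) := by
  intro M
  induction M using Multiset.induction with
  | empty =>
    intro _
    simp [Finset.sum_ite_eq, coeff_one]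
    rw [Finset.sum_eq_single 0] <;> simp +contextual
  | cons a M ih =>
    intro hmem
    have ha : |a| ≤ 1 := hmem a (Multiset.mem_cons_self a M)
    have hM : ∀ b ∈ M, |b| ≤ 1 := fun b hb => hmem b (Multiset.mem_cons_of_mem hb)
    set Q : ℝ[X] := (M.map (fun a => X - C a)).prod with hQ
    have hprod : ((a ::ₘ M).map (fun a => X - C a)).prod = (X - C a) * Q := by
      rw [Multiset.map_cons, Multiset.prod_cons]
    rw [hprod]
    have hcoeff : ∀ i, ((X - C a) * Q).coeff i = (X * Q).coeff i - a * Q.coeff i := by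
      intro i; rw [sub_mul, coeff_sub]; simp [coeff_C_mul]
    calc ∑ i ∈ Finset.range (N+1), |((X - C a) * Q).coeff i|
        ≤ (∑ i ∈ Finset.range (N+1), |(X * Q).coeff i|)
          + ∑ i ∈ Finset.range (N+1), |a * Q.coeff i| := by
          rw [← Finset.sum_add_distrib]
          refine Finset.sum_le_sum fun i _ => ?_
          rw [hcoeff i]; exact abs_sub _ _
      _ ≤ (∑ i ∈ Finset.range (N+1), |Q.coeff i|)
          + ∑ i ∈ Finset.range (N+1), |Q.coeff i| := by
          gcongr ?_ + ?_
          · rw [Finset.sum_range_succ']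
            simp only [coeff_X_mul, mul_coeff_zero, coeff_X_zero, zero_mul, abs_zero, add_zero]
            exact Finset.sum_le_sum_of_subset_of_nonneg
              (Finset.range_subset_range.2 (Nat.le_succ N)) (by intros; exact abs_nonneg _)
          · refine Finset.sum_le_sum fun i _ => ?_
            rw [abs_mul]
            exact mul_le_of_le_one_left (abs_nonneg _) ha
      _ ≤ 2 ^ (Multiset.card (a ::ₘ M)) := by
          rw [Multiset.card_cons, pow_succ]
          have := ih hM
          linarith

lemma abs_pow_le_one_add_even_pow {z : ℝ} {i n : ℕ} (hin : i ≤ 2 * n) :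
    |z| ^ i ≤ 1 + z ^ (2 * n) := by
  have hz2 : (0:ℝ) ≤ z ^ (2 * n) := even_two_mul n |>.pow_nonneg z
  rcases le_total |z| 1 with h | h
  · have : |z| ^ i ≤ 1 := pow_le_one₀ (abs_nonneg z) h
    linarith
  · have h1 : |z| ^ i ≤ |z| ^ (2 * n) := pow_le_pow_right₀ h hin
    have h2 : |z| ^ (2 * n) = z ^ (2 * n) := by
      rw [← abs_pow, abs_of_nonneg hz2]
    linarith [h1, h2 ▸ h1]

lemma poly_growth (p : ℝ[X]) : ∃ C : ℝ, 0 ≤ C ∧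
    ∀ z : ℝ, |p.eval z| ≤ C * (1 + z ^ (2 * (p.natDegree + 1))) := by
  refine ⟨∑ i ∈ Finset.range (p.natDegree + 1), |p.coeff i|,
    Finset.sum_nonneg fun _ _ => abs_nonneg _, fun z => ?_⟩
  rw [eval_eq_sum_range]
  calc |∑ i ∈ Finset.range (p.natDegree + 1), p.coeff i * z ^ i|
      ≤ ∑ i ∈ Finset.range (p.natDegree + 1), |p.coeff i| * |z| ^ i := by
        refine (Finset.abs_sum_le_sum_abs _ _).trans ?_
        refine Finset.sum_le_sum fun i _ => ?_
        rw [abs_mul, abs_pow]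
    _ ≤ ∑ i ∈ Finset.range (p.natDegree + 1), |p.coeff i| * (1 + z ^ (2 * (p.natDegree + 1))) := by
        refine Finset.sum_le_sum fun i hi => ?_
        refine mul_le_mul_of_nonneg_left ?_ (abs_nonneg _)
        exact abs_pow_le_one_add_even_pow (by simp at hi; omega)
    _ = _ := by rw [← Finset.sum_mul]

lemma moment_expand (μ : Measure ℝ) (hint : ∀ q : ℝ[X], Integrable (fun x => q.eval x) μ)
    (p : ℝ[X]) (N : ℕ) (hdeg : p.natDegree < N) :
    ∫ x, p.eval x ∂μ = ∑ i ∈ Finset.range N, p.coeff i * ∫ x, x ^ i ∂μ := by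
  have hpow : ∀ i : ℕ, Integrable (fun x : ℝ => x ^ i) μ := by
    intro i
    refine (hint (X ^ i)).congr (Filter.Eventually.of_forall fun x => ?_)
    simp
  have he : (fun x : ℝ => p.eval x) = fun x => ∑ i ∈ Finset.range N, p.coeff i * x ^ i :=
    funext fun x => eval_eq_sum_range' hdeg x
  rw [he, integral_finset_sum _ fun i _ => (hpow i).const_mul _]
  congr 1; ext i
  rw [integral_const_mul]
theorem stmt_18 (k : ℕ) (hk : 1 ≤ k) (τ : NNReal)
    (ν π' : Measure ℝ) [IsProbabilityMeasure ν] [IsProbabilityMeasure π']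
    (hν : ν (Set.Icc (-1 : ℝ) 1) = 1)
    (S : Finset ℝ) (hcard : S.card ≤ k) (hS : ↑S ⊆ Set.Icc (-1 : ℝ) 1)
    (hπ' : π' ↑S = 1)
    (ε : ℝ)
    (hm : ∀ i, 1 ≤ i → i ≤ 2 * k →
      |(∫ x, x ^ i
          ∂(Measure.map (fun p : ℝ × ℝ => p.1 + p.2) (ν.prod (gaussianReal 0 (τ ^ 2))))) -
        ∫ x, x ^ i ∂π'| ≤ ε) :
    (τ : ℝ) ≤ 2 * (ε / k.factorial) ^ (1 / (2 * (k : ℝ))) := by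
  classical
  have hε : 0 ≤ ε := le_trans (abs_nonneg _) (hm 1 le_rfl (by omega))
  set t : ℝ := (τ : ℝ) with ht
  have ht0 : 0 ≤ t := τ.coe_nonneg
  rcases eq_or_lt_of_le ht0 with h0 | htpos
  · rw [← h0]
    have : (0:ℝ) ≤ (ε / k.factorial) ^ (1 / (2 * (k:ℝ))) :=
      Real.rpow_nonneg (div_nonneg hε (Nat.cast_nonneg _)) _
    linarith
  set μτ : Measure ℝ := gaussianReal 0 (τ ^ 2) with hμτ
  haveI : IsProbabilityMeasure μτ := by rw [hμτ]; infer_instance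
  have hmapμ : μτ = Measure.map (fun y : ℝ => t * y) γ := by
    rw [γ, gaussianReal_map_const_mul, hμτ]
    congr 1
    · rw [mul_zero]
    · ext; push_cast; ring
  -- integrability over the product
  have intA : ∀ p : ℝ[X], Integrable (fun z : ℝ × ℝ => p.eval (z.1 + z.2)) (ν.prod μτ) := by
    intro p
    obtain ⟨C, hC0, hC⟩ := poly_growth p
    set n := 2 * (p.natDegree + 1) with hn
    have hint_n : Integrable (fun y : ℝ => y ^ n) μτ := by
      rw [hmapμ, integrable_map_measure (by fun_prop : Measurable fun y : ℝ => y ^ n).aestronglyMeasurable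
        (measurable_const_mul t).aemeasurable]
      refine ((integrable_poly_gamma (X ^ n)).const_mul (t ^ n)).congr
        (Filter.Eventually.of_forall fun y => ?_)
      simp [Function.comp, mul_pow]
    have hmsnd : Measure.map Prod.snd (ν.prod μτ) = μτ := by
      rw [Measure.map_snd_prod, measure_univ, one_smul]
    have h2 : Integrable (fun z : ℝ × ℝ => 1 + z.2 ^ n) (ν.prod μτ) := by
      have h1 : Integrable (fun y : ℝ => 1 + y ^ n) μτ := (integrable_const 1).add hint_n
      rw [← hmsnd] at h1
      exact ((integrable_map_measure (by fun_prop : Measurable fun y : ℝ => 1 + y ^ n).aestronglyMeasurable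
        measurable_snd.aemeasurable).1 h1).congr (Filter.Eventually.of_forall fun z => rfl)
    have hmaj : Integrable (fun z : ℝ × ℝ => (C * (1 + 2 ^ n)) * (1 + z.2 ^ n)) (ν.prod μτ) :=
      h2.const_mul _
    have haeIcc : ∀ᵐ z ∂(ν.prod μτ), z.1 ∈ Set.Icc (-1:ℝ) 1 := by
      rw [ae_iff]
      have hset : {z : ℝ × ℝ | ¬ z.1 ∈ Set.Icc (-1:ℝ) 1} = (Set.Icc (-1:ℝ) 1)ᶜ ×ˢ Set.univ := by
        ext z; simp
      rw [hset, Measure.prod_prod]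
      have hν0 : ν ((Set.Icc (-1:ℝ) 1)ᶜ) = 0 := by
        rw [measure_compl measurableSet_Icc (measure_ne_top _ _), hν, measure_univ, tsub_self]
      simp [hν0]
    refine hmaj.mono' ((p.continuous.comp (continuous_fst.add continuous_snd)).aestronglyMeasurable) ?_
    filter_upwards [haeIcc] with z hz
    have hz1 : |z.1| ≤ 1 := abs_le.2 hz
    have hz2n : (0:ℝ) ≤ z.2 ^ n := by rw [hn]; exact (even_two_mul _).pow_nonneg _
    have h2n : (0:ℝ) ≤ 2 ^ n := by positivity
    have key : (z.1 + z.2) ^ n ≤ 2 ^ n * (1 + z.2 ^ n) := by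
      have e1 : (z.1 + z.2) ^ n ≤ |z.1 + z.2| ^ n := by
        rw [← abs_pow]; exact le_abs_self _
      have e2 : |z.1 + z.2| ^ n ≤ (1 + |z.2|) ^ n := by
        refine pow_le_pow_left₀ (abs_nonneg _) ?_ n
        calc |z.1 + z.2| ≤ |z.1| + |z.2| := abs_add_le _ _
          _ ≤ 1 + |z.2| := by linarith
      have e3 : (1 + |z.2|) ^ n ≤ (2 * max 1 |z.2|) ^ n := by
        refine pow_le_pow_left₀ (by positivity) ?_ n
        rcases le_total |z.2| 1 with h | h
        · have := le_max_left (1:ℝ) |z.2|; linarith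
        · have := le_max_right (1:ℝ) |z.2|; linarith
      have e4 : (2 * max 1 |z.2|) ^ n = 2 ^ n * (max 1 |z.2|) ^ n := mul_pow _ _ _
      have e5 : (max 1 |z.2|) ^ n ≤ 1 + z.2 ^ n := by
        rcases le_total |z.2| 1 with h | h
        · rw [max_eq_left h]; simpa using hz2n
        · rw [max_eq_right h]
          have : |z.2| ^ n = z.2 ^ n := by rw [← abs_pow, abs_of_nonneg hz2n]
          rw [this]; linarith
      calc (z.1 + z.2) ^ n ≤ (2 * max 1 |z.2|) ^ n := le_trans e1 (le_trans e2 e3)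
        _ = 2 ^ n * (max 1 |z.2|) ^ n := e4
        _ ≤ 2 ^ n * (1 + z.2 ^ n) := by nlinarith
    have hb := hC (z.1 + z.2)
    rw [Real.norm_eq_abs]
    calc |p.eval (z.1 + z.2)| ≤ C * (1 + (z.1 + z.2) ^ n) := hb
      _ ≤ C * (1 + 2 ^ n * (1 + z.2 ^ n)) := by nlinarith
      _ ≤ (C * (1 + 2 ^ n)) * (1 + z.2 ^ n) := by nlinarith
  -- the convolution measure
  set πm : Measure ℝ := Measure.map (fun p : ℝ × ℝ => p.1 + p.2) (ν.prod μτ) with hπdef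
  have hadd : Measurable (fun p : ℝ × ℝ => p.1 + p.2) := measurable_fst.add measurable_snd
  haveI : IsProbabilityMeasure πm := Measure.isProbabilityMeasure_map hadd.aemeasurable
  have hπint : ∀ p : ℝ[X], Integrable (fun x => p.eval x) πm := by
    intro p
    rw [hπdef, integrable_map_measure p.continuous.aestronglyMeasurable hadd.aemeasurable]
    exact ((intA p).congr (Filter.Eventually.of_forall fun z => rfl))
  have hπeval : ∀ p : ℝ[X], ∫ x, p.eval x ∂πm = ∫ z : ℝ × ℝ, p.eval (z.1 + z.2) ∂(ν.prod μτ) := by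
    intro p
    rw [hπdef, integral_map hadd.aemeasurable p.continuous.aestronglyMeasurable]
  -- π' facts
  have hπ'ae : ∀ᵐ x ∂π', x ∈ (S : Set ℝ) := by
    rw [ae_iff]
    have : {x : ℝ | ¬ x ∈ (S : Set ℝ)} = (S : Set ℝ)ᶜ := rfl
    rw [this, measure_compl (S.finite_toSet.measurableSet) (measure_ne_top _ _), hπ',
      measure_univ, tsub_self]
  have hπ'int : ∀ p : ℝ[X], Integrable (fun x => p.eval x) π' := by
    intro p
    obtain ⟨C, hC0, hC⟩ := poly_growth p
    refine (integrable_const (C * 2)).mono' p.continuous.aestronglyMeasurable ?_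
    filter_upwards [hπ'ae] with x hx
    have hx1 : |x| ≤ 1 := abs_le.2 (hS hx)
    have hxn : x ^ (2 * (p.natDegree + 1)) ≤ 1 := by
      have : |x| ^ (2 * (p.natDegree + 1)) ≤ 1 := pow_le_one₀ (abs_nonneg _) hx1
      calc x ^ (2 * (p.natDegree + 1)) ≤ |x| ^ (2 * (p.natDegree + 1)) := by
            rw [← abs_pow]; exact le_abs_self _
        _ ≤ 1 := this
    have := hC x
    rw [Real.norm_eq_abs]
    nlinarith
  -- construction of P
  have hSne : S.Nonempty := by
    rcases S.eq_empty_or_nonempty with h | h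
    · exfalso; rw [h] at hπ'; simp at hπ'
    · exact h
  obtain ⟨a₀, ha₀⟩ := hSne
  set M : Multiset ℝ := S.val + Multiset.replicate (k - S.card) a₀ with hM
  have hMmem : ∀ a ∈ M, |a| ≤ 1 := by
    intro a ha
    rcases Multiset.mem_add.1 ha with h | h
    · exact abs_le.2 (hS h)
    · rw [Multiset.eq_of_mem_replicate h]; exact abs_le.2 (hS ha₀)
  have hMcard : Multiset.card M = k := by
    rw [hM, Multiset.card_add, Multiset.card_replicate]
    have : Multiset.card S.val = S.card := rfl
    omega
  set Q : ℝ[X] := (M.map (fun a => X - C a)).prod with hQ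
  have hQmonic : Q.Monic := monic_multiset_prod_of_monic _ _ (fun a _ => monic_X_sub_C a)
  have hQdeg : Q.natDegree = k := by
    rw [hQ, natDegree_multiset_prod_of_monic _ (fun f hf => by
      obtain ⟨a, _, rfl⟩ := Multiset.mem_map.1 hf; exact monic_X_sub_C a)]
    rw [Multiset.map_map]
    simp only [Function.comp, natDegree_X_sub_C]
    rw [Multiset.map_const', Multiset.sum_replicate, hMcard, smul_eq_mul, mul_one]
  set P : ℝ[X] := Q * Q with hP
  have hPdeg : P.natDegree = 2 * k := by
    rw [hP, hQmonic.natDegree_mul hQmonic, hQdeg]; ring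
  have hPzero : ∀ a ∈ S, P.eval a = 0 := by
    intro a ha
    have hQa : Q.eval a = 0 := by
      rw [hQ, eval_multiset_prod]
      refine Multiset.prod_eq_zero ?_
      rw [Multiset.map_map]
      refine Multiset.mem_map.2 ⟨a, ?_, by simp⟩
      exact Multiset.mem_add.2 (Or.inl ha)
    rw [hP, eval_mul, hQa, mul_zero]
  have hPnonneg : ∀ z : ℝ, 0 ≤ P.eval z := by
    intro z; rw [hP, eval_mul]; exact mul_self_nonneg _
  -- upper bound via moment matching
  have hEπ'P : ∫ x, P.eval x ∂π' = 0 := by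
    refine integral_eq_zero_of_ae ?_
    filter_upwards [hπ'ae] with x hx
    exact hPzero x hx
  have hπP := moment_expand πm hπint P (2 * k + 1) (by rw [hPdeg]; omega)
  have hπ'P := moment_expand π' hπ'int P (2 * k + 1) (by rw [hPdeg]; omega)
  have hm0 : (∫ x : ℝ, x ^ 0 ∂πm) = (∫ x : ℝ, x ^ 0 ∂π' : ℝ) := by simp
  have hub : ∫ x, P.eval x ∂πm ≤ ε * 2 ^ (2 * k) := by
    have hdiff : ∫ x, P.eval x ∂πm
        = ∑ i ∈ Finset.range (2 * k + 1),
            P.coeff i * ((∫ x, x ^ i ∂πm) - ∫ x, x ^ i ∂π') := by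
      rw [hπP]
      have h0' := hπ'P; rw [hEπ'P] at h0'
      calc ∑ i ∈ Finset.range (2 * k + 1), P.coeff i * ∫ x, x ^ i ∂πm
          = (∑ i ∈ Finset.range (2 * k + 1), P.coeff i * ∫ x, x ^ i ∂πm)
            - ∑ i ∈ Finset.range (2 * k + 1), P.coeff i * ∫ x, x ^ i ∂π' := by
            rw [← h0']; ring
        _ = _ := by rw [← Finset.sum_sub_distrib]; congr 1; ext i; ring
    have habs : ∀ i ∈ Finset.range (2 * k + 1),
        P.coeff i * ((∫ x, x ^ i ∂πm) - ∫ x, x ^ i ∂π') ≤ |P.coeff i| * ε := by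
      intro i hi
      rcases Nat.eq_zero_or_pos i with rfl | hipos
      · rw [hm0, sub_self, mul_zero]
        positivity
      · have hbd := hm i hipos (by simp only [Finset.mem_range] at hi; omega)
        calc P.coeff i * ((∫ x, x ^ i ∂πm) - ∫ x, x ^ i ∂π')
            ≤ |P.coeff i * ((∫ x, x ^ i ∂πm) - ∫ x, x ^ i ∂π')| := le_abs_self _
          _ = |P.coeff i| * |(∫ x, x ^ i ∂πm) - ∫ x, x ^ i ∂π'| := abs_mul _ _
          _ ≤ |P.coeff i| * ε := mul_le_mul_of_nonneg_left hbd (abs_nonneg _)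
    have hl1 : ∑ i ∈ Finset.range (2 * k + 1), |P.coeff i| ≤ 2 ^ (2 * k) := by
      have hPalt : ((M + M).map (fun a => X - C a)).prod = P := by
        have e := Multiset.map_add (fun a : ℝ => X - C a) M M
        rw [e, Multiset.prod_add, ← hQ, ← hP]
      have hl := l1_linear_prod (2 * k) (M + M) (fun a ha => by
        rcases Multiset.mem_add.1 ha with h | h
        exacts [hMmem a h, hMmem a h])
      rw [Multiset.card_add, hMcard, ← two_mul, hPalt] at hl
      exact hl
    calc ∫ x, P.eval x ∂πm
        = ∑ i ∈ Finset.range (2 * k + 1),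
            P.coeff i * ((∫ x, x ^ i ∂πm) - ∫ x, x ^ i ∂π') := hdiff
      _ ≤ ∑ i ∈ Finset.range (2 * k + 1), |P.coeff i| * ε := Finset.sum_le_sum habs
      _ = (∑ i ∈ Finset.range (2 * k + 1), |P.coeff i|) * ε := by rw [Finset.sum_mul]
      _ ≤ 2 ^ (2 * k) * ε := mul_le_mul_of_nonneg_right hl1 hε
      _ = ε * 2 ^ (2 * k) := mul_comm _ _
  -- lower bound
  have hlb : (k.factorial : ℝ) * t ^ (2 * k) ≤ ∫ x, P.eval x ∂πm := by
    rw [hπeval P, integral_prod _ (intA P)]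
    have hFlb : ∀ x : ℝ, (k.factorial : ℝ) * t ^ (2 * k) ≤ ∫ y, P.eval (x + y) ∂μτ := by
      intro x
      have hFx : ∫ y, P.eval (x + y) ∂μτ = ∫ y, P.eval (x + t * y) ∂γ := by
        rw [hmapμ, integral_map (measurable_const_mul t).aemeasurable
          (show AEStronglyMeasurable (fun y : ℝ => eval (x + y) P)
              (Measure.map (fun y : ℝ => t * y) γ) from
            (P.continuous.comp (continuous_add_left x)).aestronglyMeasurable)]
      set R : ℝ[X] := (M.map (fun a => X + C ((x - a) / t))).prod with hR
      have hRmonic : R.Monic := monic_multiset_prod_of_monic _ _ (fun a _ => monic_X_add_C _)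
      have hRdeg : R.natDegree = k := by
        rw [hR, natDegree_multiset_prod_of_monic _ (fun f hf => by
          obtain ⟨a, _, rfl⟩ := Multiset.mem_map.1 hf; exact monic_X_add_C _)]
        rw [Multiset.map_map]
        simp only [Function.comp, natDegree_X_add_C]
        rw [Multiset.map_const', Multiset.sum_replicate, hMcard, smul_eq_mul, mul_one]
      have hkey : ∀ y : ℝ, P.eval (x + t * y) = t ^ (2 * k) * (R.eval y) ^ 2 := by
        intro y
        have hQe : Q.eval (x + t * y) = t ^ k * R.eval y := by
          rw [hQ, hR, eval_multiset_prod, eval_multiset_prod, Multiset.map_map, Multiset.map_map]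
          have ht' : t ^ k = ((M.map (fun _ : ℝ => t)).prod) := by
            rw [Multiset.map_const', Multiset.prod_replicate, hMcard]
          rw [ht', ← Multiset.prod_map_mul]
          congr 1
          refine Multiset.map_congr rfl fun a ha => ?_
          simp only [Function.comp, eval_sub, eval_add, eval_X, eval_C]
          field_simp
          ring
        rw [hP, eval_mul, hQe]; ring
      rw [hFx]
      have e : ∫ y, P.eval (x + t * y) ∂γ = t ^ (2 * k) * ∫ y, (R.eval y) ^ 2 ∂γ := by
        rw [← integral_const_mul]; congr 1; ext y; exact hkey y
      rw [e]
      have hsq := sq_integral_lb k R hRmonic hRdeg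
      have htp : (0:ℝ) ≤ t ^ (2 * k) := pow_nonneg ht0 _
      calc (k.factorial : ℝ) * t ^ (2 * k) = t ^ (2 * k) * (k.factorial : ℝ) := by ring
        _ ≤ t ^ (2 * k) * ∫ y, (R.eval y) ^ 2 ∂γ := mul_le_mul_of_nonneg_left hsq htp
    have hFint : Integrable (fun x => ∫ y, P.eval (x + y) ∂μτ) ν := (intA P).integral_prod_left
    calc (k.factorial : ℝ) * t ^ (2 * k)
        = ∫ _x, (k.factorial : ℝ) * t ^ (2 * k) ∂ν := by
          rw [integral_const]; simp
      _ ≤ ∫ x, ∫ y, P.eval (x + y) ∂μτ ∂ν := integral_mono (integrable_const _) hFint hFlb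
  -- conclusion
  have hmain : (k.factorial : ℝ) * t ^ (2 * k) ≤ ε * 2 ^ (2 * k) := le_trans hlb hub
  have hkf : (0:ℝ) < k.factorial := by exact_mod_cast k.factorial_pos
  have hr0 : (0:ℝ) ≤ ε / k.factorial := div_nonneg hε hkf.le
  have hRHS : (2 * (ε / k.factorial) ^ (1 / (2 * (k:ℝ)))) ^ (2 * k)
      = 2 ^ (2 * k) * (ε / k.factorial) := by
    rw [mul_pow]
    congr 1
    rw [← Real.rpow_natCast ((ε / ↑k.factorial) ^ (1 / (2 * (k:ℝ)))) (2 * k),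
      ← Real.rpow_mul hr0]
    have : (1 / (2 * (k:ℝ))) * ((2 * k : ℕ) : ℝ) = 1 := by
      have hk0 : (k:ℝ) ≠ 0 := Nat.cast_ne_zero.2 (by omega)
      push_cast
      field_simp
    rw [this, Real.rpow_one]
  have hfin : t ^ (2 * k) ≤ (2 * (ε / k.factorial) ^ (1 / (2 * (k:ℝ)))) ^ (2 * k) := by
    rw [hRHS]
    have h2 : t ^ (2 * k) ≤ ε * 2 ^ (2 * k) / k.factorial := by
      rw [le_div_iff₀ hkf]
      linarith [hmain]
    calc t ^ (2 * k) ≤ ε * 2 ^ (2 * k) / k.factorial := h2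
      _ = 2 ^ (2 * k) * (ε / k.factorial) := by ring
  have h2r0 : 0 ≤ 2 * (ε / k.factorial) ^ (1 / (2 * (k:ℝ))) := by positivity
  exact (pow_le_pow_iff_left₀ ht0 h2r0 (by omega)).1 hfin
end

section
/- Let U and U' be random variables each taking at most k values in [−1,1], and suppose |E[U^j] − E[U'^j]| ≤ ε for j = 1, …, 2k−1. Then for every integer ℓ ≥ 2k, |E[U^ℓ] − E[U'^ℓ]| ≤ 3^ℓ ε. -/
open MeasureTheory



open Polynomial Finset

noncomputable def sac (P : Polynomial ℝ) : ℝ := ∑ j ∈ P.support, |P.coeff j|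

lemma sac_eq_sum {P : Polynomial ℝ} {s : Finset ℕ} (h : P.support ⊆ s) :
    sac P = ∑ j ∈ s, |P.coeff j| :=
  Finset.sum_subset h (fun j _ hj => by
    simp [Polynomial.notMem_support_iff.mp hj])

lemma sac_nonneg (P : Polynomial ℝ) : 0 ≤ sac P :=
  Finset.sum_nonneg fun _ _ => abs_nonneg _

lemma sac_add_le (P Q : Polynomial ℝ) : sac (P + Q) ≤ sac P + sac Q := by
  have hsub : (P + Q).support ⊆ P.support ∪ Q.support := Polynomial.support_add
  rw [sac_eq_sum hsub, sac_eq_sum (Finset.subset_union_left (s₂ := Q.support)),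
    sac_eq_sum (Finset.subset_union_right (s₁ := P.support)), ← Finset.sum_add_distrib]
  apply Finset.sum_le_sum
  intro j _
  simpa using abs_add_le (P.coeff j) (Q.coeff j)

lemma sac_C_mul (a : ℝ) (P : Polynomial ℝ) : sac (C a * P) ≤ |a| * sac P := by
  have hsub : (C a * P).support ⊆ P.support := by
    intro j hj
    rw [Polynomial.mem_support_iff] at hj ⊢
    intro h; apply hj; simp [Polynomial.coeff_C_mul, h]
  rw [sac_eq_sum hsub, sac, Finset.mul_sum]
  apply Finset.sum_le_sum
  intro j _
  rw [Polynomial.coeff_C_mul, abs_mul]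

lemma sac_X_mul (P : Polynomial ℝ) : sac (X * P) = sac P := by
  have hsub : (X * P).support ⊆ P.support.image (· + 1) := by
    intro j hj
    rw [Polynomial.mem_support_iff] at hj
    rcases j with _ | j
    · simp at hj
    · simp only [Polynomial.coeff_X_mul] at hj
      exact Finset.mem_image.2 ⟨j, Polynomial.mem_support_iff.2 hj, rfl⟩
  rw [sac_eq_sum hsub, Finset.sum_image (by intro a _ b _ h; beta_reduce at h; omega)]
  simp [Polynomial.coeff_X_mul, sac]

lemma sac_one : sac (1 : Polynomial ℝ) = 1 := by
  rw [sac_eq_sum (s := {0}) (by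
    intro j hj
    rw [Polynomial.mem_support_iff, Polynomial.coeff_one] at hj
    simp at hj ⊢
    omega)]
  simp

lemma sac_sub_le (P Q : Polynomial ℝ) : sac (P - Q) ≤ sac P + sac Q := by
  have : sac (-Q) = sac Q := by
    simp [sac, Polynomial.support_neg]
  calc sac (P - Q) = sac (P + (-Q)) := by ring_nf
    _ ≤ sac P + sac (-Q) := sac_add_le _ _
    _ = sac P + sac Q := by rw [this]

noncomputable def newt (xs : ℕ → ℝ) (i : ℕ) : Polynomial ℝ :=
  ∏ j ∈ Finset.range i, (X - C (xs j))

lemma newt_succ (xs : ℕ → ℝ) (i : ℕ) :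
    newt xs (i + 1) = X * newt xs i - C (xs i) * newt xs i := by
  rw [newt, Finset.prod_range_succ, ← newt, mul_comm, sub_mul]

lemma sac_newt_le (xs : ℕ → ℝ) (hxs : ∀ i, |xs i| ≤ 1) (i : ℕ) :
    sac (newt xs i) ≤ 2 ^ i := by
  induction i with
  | zero => simp [newt, sac_one]
  | succ i ih =>
    rw [newt_succ]
    calc sac (X * newt xs i - C (xs i) * newt xs i)
        ≤ sac (X * newt xs i) + sac (C (xs i) * newt xs i) := sac_sub_le _ _
      _ ≤ sac (newt xs i) + |xs i| * sac (newt xs i) := by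
          rw [sac_X_mul]
          exact add_le_add le_rfl (sac_C_mul _ _)
      _ ≤ 2 ^ i + 1 * 2 ^ i := by
          have h2 := sac_nonneg (newt xs i)
          have := mul_le_mul (hxs i) ih h2 zero_le_one
          linarith
      _ = 2 ^ (i + 1) := by ring

lemma newt_natDegree_le (xs : ℕ → ℝ) (i : ℕ) : (newt xs i).natDegree ≤ i := by
  rw [newt]
  have h1 := Polynomial.natDegree_prod_le (Finset.range i) (fun j => X - C (xs j))
  have h2 : ∑ j ∈ Finset.range i, (X - C (xs j)).natDegree ≤ i := by
    have : ∀ j ∈ Finset.range i, (X - C (xs j)).natDegree ≤ 1 := fun j _ =>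
      le_of_eq (Polynomial.natDegree_X_sub_C _)
    have h3 : ∑ j ∈ Finset.range i, (X - C (xs j)).natDegree
        ≤ ∑ _j ∈ Finset.range i, (1 : ℕ) := Finset.sum_le_sum this
    simpa using h3
  exact le_trans h1 h2

noncomputable def ncf (xs : ℕ → ℝ) : ℕ → ℕ → ℝ
  | 0, i => if i = 0 then 1 else 0
  | m + 1, i => xs i * ncf xs m i + (if i = 0 then 0 else ncf xs m (i - 1))

lemma ncf_abs_le (xs : ℕ → ℝ) (hxs : ∀ i, |xs i| ≤ 1) (m i : ℕ) :
    |ncf xs m i| ≤ Nat.choose m i := by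
  induction m generalizing i with
  | zero =>
    rcases i with _ | i <;> simp [ncf]
  | succ m ih =>
    rcases i with _ | i
    · rw [ncf]
      simp only [eq_self_iff_true, if_true, add_zero, abs_mul]
      calc |xs 0| * |ncf xs m 0| ≤ 1 * (Nat.choose m 0 : ℝ) :=
            mul_le_mul (hxs 0) (ih 0) (abs_nonneg _) zero_le_one
        _ = Nat.choose (m+1) 0 := by simp
    · rw [ncf]
      simp only [Nat.succ_ne_zero, if_neg, Nat.add_sub_cancel]
      calc |xs (i+1) * ncf xs m (i+1) + ncf xs m i|
          ≤ |xs (i+1) * ncf xs m (i+1)| + |ncf xs m i| := abs_add_le _ _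
        _ ≤ 1 * (Nat.choose m (i+1) : ℝ) + Nat.choose m i := by
            rw [abs_mul]
            exact add_le_add (mul_le_mul (hxs _) (ih _) (abs_nonneg _) zero_le_one) (ih i)
        _ = (Nat.choose (m+1) (i+1) : ℝ) := by
            rw [one_mul, Nat.choose_succ_succ]
            push_cast; ring

lemma newton_rep (xs : ℕ → ℝ) (n : ℕ) (hn : 1 ≤ n) (m : ℕ) :
    ∃ q : Polynomial ℝ, (X : Polynomial ℝ) ^ m =
      q * newt xs n + ∑ i ∈ Finset.range n, C (ncf xs m i) * newt xs i := by
  induction m with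
  | zero =>
    refine ⟨0, ?_⟩
    rw [pow_zero, zero_mul, zero_add]
    have h0 : ∑ i ∈ Finset.range n, C (ncf xs 0 i) * newt xs i
        = ∑ i ∈ Finset.range n, (if i = 0 then (1 : Polynomial ℝ) else 0) := by
      apply Finset.sum_congr rfl
      intro i _
      rcases i with _ | i <;> simp [ncf, newt]
    rw [h0, Finset.sum_ite_eq' (Finset.range n) 0 (fun _ => (1 : Polynomial ℝ))]
    have : 0 < n := hn
    simp [Finset.mem_range, this]
  | succ m ih =>
    obtain ⟨q, hq⟩ := ih
    refine ⟨X * q + C (ncf xs m (n - 1)), ?_⟩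
    have key : ∀ i, X * (C (ncf xs m i) * newt xs i)
        = C (ncf xs m i) * newt xs (i + 1) + C (xs i * ncf xs m i) * newt xs i := by
      intro i
      rw [newt_succ]
      rw [C_mul]
      ring
    rw [pow_succ, mul_comm ((X:Polynomial ℝ)^m) X, hq, mul_add, Finset.mul_sum]
    have hsum : ∑ i ∈ Finset.range n, X * (C (ncf xs m i) * newt xs i)
        = ∑ i ∈ Finset.range n, C (ncf xs m i) * newt xs (i + 1)
          + ∑ i ∈ Finset.range n, C (xs i * ncf xs m i) * newt xs i := by
      rw [← Finset.sum_add_distrib]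
      exact Finset.sum_congr rfl fun i _ => key i
    rw [hsum]
    -- shift the first sum
    have hshift : ∑ i ∈ Finset.range n, C (ncf xs m i) * newt xs (i + 1)
        = (∑ i ∈ Finset.range n,
            (if i = 0 then (0:Polynomial ℝ) else C (ncf xs m (i-1)) * newt xs i))
          + C (ncf xs m (n-1)) * newt xs n := by
      have h1 : ∀ i, (fun j => if j = 0 then (0:Polynomial ℝ)
          else C (ncf xs m (j-1)) * newt xs j) (i + 1) = C (ncf xs m i) * newt xs (i+1) := by
        intro i; simp
      calc ∑ i ∈ Finset.range n, C (ncf xs m i) * newt xs (i + 1)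
          = ∑ i ∈ Finset.range n, (fun j => if j = 0 then (0:Polynomial ℝ)
              else C (ncf xs m (j-1)) * newt xs j) (i + 1) := by
            exact (Finset.sum_congr rfl fun i _ => (h1 i).symm)
        _ = ∑ i ∈ Finset.range (n+1), (fun j => if j = 0 then (0:Polynomial ℝ)
              else C (ncf xs m (j-1)) * newt xs j) i := by
            rw [Finset.sum_range_succ']
            simp
        _ = (∑ i ∈ Finset.range n,
              (if i = 0 then (0:Polynomial ℝ) else C (ncf xs m (i-1)) * newt xs i))
            + C (ncf xs m (n-1)) * newt xs n := by
            rw [Finset.sum_range_succ]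
            have : n ≠ 0 := by omega
            simp [this]
    rw [hshift]
    have hfinal : ∑ i ∈ Finset.range n, C (ncf xs (m+1) i) * newt xs i
        = (∑ i ∈ Finset.range n,
            (if i = 0 then (0:Polynomial ℝ) else C (ncf xs m (i-1)) * newt xs i))
          + ∑ i ∈ Finset.range n, C (xs i * ncf xs m i) * newt xs i := by
      rw [← Finset.sum_add_distrib]
      apply Finset.sum_congr rfl
      intro i _
      rcases i with _ | i
      · simp [ncf]
      · rw [ncf]
        have : (i + 1 : ℕ) ≠ 0 := by omega
        simp only [this, if_neg, Nat.add_sub_cancel, if_false]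
        rw [C_add]
        ring
    rw [hfinal]
    ring

lemma sac_sum_le {s : Finset ℕ} (f : ℕ → Polynomial ℝ) :
    sac (∑ i ∈ s, f i) ≤ ∑ i ∈ s, sac (f i) := by
  classical
  induction s using Finset.cons_induction with
  | empty => simp [sac]
  | cons a s ha ih =>
    rw [Finset.sum_cons, Finset.sum_cons]
    exact le_trans (sac_add_le _ _) (add_le_add le_rfl ih)

lemma exists_interp (xs : ℕ → ℝ) (n : ℕ) (hn : 1 ≤ n) (hxs : ∀ i, |xs i| ≤ 1)
    (m : ℕ) (hnm : n ≤ m) :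
    ∃ p : Polynomial ℝ, p.natDegree < n ∧ sac p ≤ 3 ^ m ∧
      ∀ j < n, p.eval (xs j) = (xs j) ^ m := by
  refine ⟨∑ i ∈ Finset.range n, C (ncf xs m i) * newt xs i, ?_, ?_, ?_⟩
  · have : ∀ i ∈ Finset.range n, (C (ncf xs m i) * newt xs i).natDegree ≤ n - 1 := by
      intro i hi
      rw [Finset.mem_range] at hi
      calc (C (ncf xs m i) * newt xs i).natDegree ≤ (newt xs i).natDegree :=
            Polynomial.natDegree_C_mul_le _ _
        _ ≤ i := newt_natDegree_le _ _
        _ ≤ n - 1 := by omega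
    have h := Polynomial.natDegree_sum_le_of_forall_le (Finset.range n) _ this
    omega
  · calc sac (∑ i ∈ Finset.range n, C (ncf xs m i) * newt xs i)
        ≤ ∑ i ∈ Finset.range n, sac (C (ncf xs m i) * newt xs i) := sac_sum_le _
      _ ≤ ∑ i ∈ Finset.range n, (Nat.choose m i : ℝ) * 2 ^ i := by
          apply Finset.sum_le_sum
          intro i _
          calc sac (C (ncf xs m i) * newt xs i) ≤ |ncf xs m i| * sac (newt xs i) :=
                sac_C_mul _ _
            _ ≤ (Nat.choose m i : ℝ) * 2 ^ i := by
                apply mul_le_mul (ncf_abs_le xs hxs m i) (sac_newt_le xs hxs i)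
                  (sac_nonneg _)
                positivity
      _ ≤ ∑ i ∈ Finset.range (m + 1), (Nat.choose m i : ℝ) * 2 ^ i := by
          apply Finset.sum_le_sum_of_subset_of_nonneg
          · exact Finset.range_subset_range.2 (by omega)
          · intro i _ _; positivity
      _ = 3 ^ m := by
          have h := add_pow (2 : ℝ) 1 m
          norm_num at h
          rw [h]
          apply Finset.sum_congr rfl
          intro i _
          ring
  · intro j hj
    obtain ⟨q, hq⟩ := newton_rep xs n hn m
    have heval := congrArg (Polynomial.eval (xs j)) hq
    rw [Polynomial.eval_pow, Polynomial.eval_X, Polynomial.eval_add,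
      Polynomial.eval_mul] at heval
    have hz : (newt xs n).eval (xs j) = 0 := by
      rw [newt, Polynomial.eval_prod]
      apply Finset.prod_eq_zero (Finset.mem_range.2 hj)
      simp
    rw [hz, mul_zero, zero_add] at heval
    exact heval.symm

open MeasureTheory

lemma ae_mem_of_full (ν : Measure ℝ) [IsProbabilityMeasure ν] (F : Finset ℝ)
    (hν : ν ↑F = 1) : ∀ᵐ x ∂ν, x ∈ (F : Set ℝ) := by
  have hc : ν (↑F)ᶜ = 0 := by
    rw [measure_compl F.measurableSet (measure_ne_top ν _), hν, measure_univ]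
    simp
  rw [MeasureTheory.ae_iff]
  exact hc

lemma integrable_pow_of_full (ν : Measure ℝ) [IsProbabilityMeasure ν] (F : Finset ℝ)
    (hF : ↑F ⊆ Set.Icc (-1 : ℝ) 1) (hν : ν ↑F = 1) (j : ℕ) :
    Integrable (fun x => x ^ j) ν := by
  apply Integrable.mono' (integrable_const (1 : ℝ))
    ((continuous_pow j).aestronglyMeasurable)
  filter_upwards [ae_mem_of_full ν F hν] with x hx
  have h := hF hx
  rw [Set.mem_Icc] at h
  have : |x| ≤ 1 := abs_le.2 h
  rw [Real.norm_eq_abs, abs_pow]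
  exact pow_le_one₀ (abs_nonneg _) this

lemma moment_expand_s19 (ν : Measure ℝ) [IsProbabilityMeasure ν] (F : Finset ℝ)
    (hF : ↑F ⊆ Set.Icc (-1 : ℝ) 1) (hν : ν ↑F = 1) (p : Polynomial ℝ) (ℓ : ℕ)
    (hevalF : ∀ t ∈ F, p.eval t = t ^ ℓ) :
    ∫ x, x ^ ℓ ∂ν
      = ∑ j ∈ Finset.range (p.natDegree + 1), p.coeff j * ∫ x, x ^ j ∂ν := by
  have h1 : ∫ x, x ^ ℓ ∂ν = ∫ x, p.eval x ∂ν := by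
    apply integral_congr_ae
    filter_upwards [ae_mem_of_full ν F hν] with x hx
    exact (hevalF x hx).symm
  rw [h1]
  have h2 : ∀ x, p.eval x = ∑ j ∈ Finset.range (p.natDegree + 1), p.coeff j * x ^ j :=
    fun x => Polynomial.eval_eq_sum_range _
  simp_rw [h2]
  rw [integral_finset_sum]
  · exact Finset.sum_congr rfl fun j _ => integral_const_mul _ _
  · intro j _
    exact (integrable_pow_of_full ν F hF hν j).const_mul _


theorem stmt_19 (k : ℕ) (μ μ' : Measure ℝ) [IsProbabilityMeasure μ] [IsProbabilityMeasure μ']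
    (S S' : Finset ℝ) (hcard : S.card ≤ k) (hcard' : S'.card ≤ k)
    (hS : ↑S ⊆ Set.Icc (-1 : ℝ) 1) (hS' : ↑S' ⊆ Set.Icc (-1 : ℝ) 1)
    (hsupp : μ ↑S = 1) (hsupp' : μ' ↑S' = 1)
    (ε : ℝ)
    (hm : ∀ j, 1 ≤ j → j ≤ 2 * k - 1 → |∫ x, x ^ j ∂μ - ∫ x, x ^ j ∂μ'| ≤ ε) :
    ∀ ℓ : ℕ, 2 * k ≤ ℓ → |∫ x, x ^ ℓ ∂μ - ∫ x, x ^ ℓ ∂μ'| ≤ 3 ^ ℓ * ε := by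
  intro ℓ hℓ
  classical
  have hSne : S.Nonempty := by
    rcases Finset.eq_empty_or_nonempty S with h | h
    · exfalso; rw [h] at hsupp; simp at hsupp
    · exact h
  have hk : 1 ≤ k := le_trans (Finset.card_pos.2 hSne) hcard
  have hε : 0 ≤ ε := le_trans (abs_nonneg _) (hm 1 le_rfl (by omega))
  set T := S ∪ S' with hT
  have hSsubT : S ⊆ T := Finset.subset_union_left
  have hS'subT : S' ⊆ T := Finset.subset_union_right
  have hTne : T.Nonempty := hSne.mono hSsubT
  set n := T.card with hndef
  have hn1 : 1 ≤ n := Finset.card_pos.2 hTne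
  have hn2k : n ≤ 2 * k := le_trans (Finset.card_union_le S S') (by omega)
  have hnℓ : n ≤ ℓ := le_trans hn2k hℓ
  have hTIcc : ∀ t ∈ T, |t| ≤ 1 := by
    intro t ht
    rcases Finset.mem_union.1 ht with h | h
    · have := hS h; rw [Set.mem_Icc] at this; exact abs_le.2 this
    · have := hS' h; rw [Set.mem_Icc] at this; exact abs_le.2 this
  set L := T.toList with hLdef
  have hLlen : L.length = n := Finset.length_toList T
  set xs : ℕ → ℝ := fun i => if h : i < L.length then L.get ⟨i, h⟩ else 0 with hxsdef
  have hxs : ∀ i, |xs i| ≤ 1 := by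
    intro i
    rw [hxsdef]
    by_cases h : i < L.length
    · simp only [dif_pos h]
      apply hTIcc
      rw [← Finset.mem_toList]
      exact L.get_mem ⟨i, h⟩
    · simp [dif_neg h]
  have hxmem : ∀ t ∈ T, ∃ j < n, xs j = t := by
    intro t ht
    rw [← Finset.mem_toList, ← hLdef, List.mem_iff_get] at ht
    obtain ⟨j, hj⟩ := ht
    refine ⟨j, by rw [← hLlen]; exact j.isLt, ?_⟩
    rw [hxsdef]
    simp only [dif_pos j.isLt]
    rw [← hj]
  obtain ⟨p, hdeg, hsac, heval⟩ := exists_interp xs n hn1 hxs ℓ hnℓ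
  have hevalT : ∀ t ∈ T, p.eval t = t ^ ℓ := by
    intro t ht
    obtain ⟨j, hjn, hje⟩ := hxmem t ht
    rw [← hje]
    exact heval j hjn
  have hμeq := moment_expand_s19 μ S hS hsupp p ℓ (fun t ht => hevalT t (hSsubT ht))
  have hμ'eq := moment_expand_s19 μ' S' hS' hsupp' p ℓ (fun t ht => hevalT t (hS'subT ht))
  rw [hμeq, hμ'eq, ← Finset.sum_sub_distrib]
  have key : ∀ j ∈ Finset.range (p.natDegree + 1),
      |p.coeff j * ∫ x, x ^ j ∂μ - p.coeff j * ∫ x, x ^ j ∂μ'| ≤ |p.coeff j| * ε := by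
    intro j hj
    rw [Finset.mem_range] at hj
    rw [← mul_sub, abs_mul]
    apply mul_le_mul_of_nonneg_left _ (abs_nonneg _)
    rcases Nat.eq_zero_or_pos j with rfl | hjpos
    · have e1 : ∫ x, x ^ (0:ℕ) ∂μ = 1 := by simp
      have e2 : ∫ x, x ^ (0:ℕ) ∂μ' = 1 := by simp
      rw [e1, e2]
      simpa using hε
    · exact hm j hjpos (by omega)
  calc |∑ j ∈ Finset.range (p.natDegree + 1),
          (p.coeff j * ∫ x, x ^ j ∂μ - p.coeff j * ∫ x, x ^ j ∂μ')|
      ≤ ∑ j ∈ Finset.range (p.natDegree + 1),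
          |p.coeff j * ∫ x, x ^ j ∂μ - p.coeff j * ∫ x, x ^ j ∂μ'| :=
        Finset.abs_sum_le_sum_abs _ _
    _ ≤ ∑ j ∈ Finset.range (p.natDegree + 1), |p.coeff j| * ε := Finset.sum_le_sum key
    _ = (∑ j ∈ Finset.range (p.natDegree + 1), |p.coeff j|) * ε :=
        (Finset.sum_mul _ _ _).symm
    _ = sac p * ε := by
        rw [sac_eq_sum (Polynomial.supp_subset_range_natDegree_succ)]
    _ ≤ 3 ^ ℓ * ε := mul_le_mul_of_nonneg_right hsac hε
end
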